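/- Let (D1, M) be a periodic first-derivative SBP operator with diagonal mass matrix (M symmetric positive definite and diagonal, M·D1 + D1ᵀ·M = 0), D2 a periodic second-derivative SBP operator with the same mass matrix (M·D2 = −A2, A2 symmetric positive semidefinite), and D4 a periodic fourth-derivative SBP operator with the same mass matrix (M·D4 = A4, A4 symmetric positive semidefinite). Set L = 4I − 5·D2 + D4; then L is invertible. For every differentiable u : ℝ → ℝ^m satisfying the Holm-Hone semidiscretization ∂ₜu = −L⁻¹·(D1·(u∘(L·u)) + (D1·u)∘(L·u)) for all t, the discrete Hamiltonian (1/2)·u(t)ᵀ·M·L·u(t) = (1/2)·u(t)ᵀ·M·(4I − 5·D2 + D4)·u(t) is constant in t. -/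

import Mathlib

open Matrix

private lemma hh_dot_trans {m : ℕ} (A : Matrix (Fin m) (Fin m) ℝ) (a b : Fin m → ℝ) :
    a ⬝ᵥ (A *ᵥ b) = (Aᵀ *ᵥ a) ⬝ᵥ b := by
  rw [Matrix.dotProduct_mulVec, Matrix.mulVec_transpose]

private lemma hh_diag_mulVec_mul {m : ℕ} {M : Matrix (Fin m) (Fin m) ℝ} (hM : M.IsDiag)
    (x y : Fin m → ℝ) : M *ᵥ (x * y) = (M *ᵥ x) * y := by
  funext i
  simp only [Matrix.mulVec, dotProduct, Pi.mul_apply, Finset.sum_mul]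
  refine Finset.sum_congr rfl fun j _ => ?_
  by_cases h : i = j
  · subst h; ring
  · rw [hM h]; ring

private lemma hh_dot_mul_right {m : ℕ} (x p y : Fin m → ℝ) :
    x ⬝ᵥ (p * y) = (x * y) ⬝ᵥ p := by
  simp only [dotProduct, Pi.mul_apply]
  exact Finset.sum_congr rfl fun j _ => by ring

private lemma hh_transpose_symm {m : ℕ} {A : Matrix (Fin m) (Fin m) ℝ}
    (hA : A.IsHermitian) : Aᵀ = A := by
  ext i j
  rw [Matrix.transpose_apply]
  conv_rhs => rw [← hA.eq]
  simp [Matrix.conjTranspose_apply]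

private lemma hh_posDef_smul {m : ℕ} {M : Matrix (Fin m) (Fin m) ℝ} (hM : M.PosDef)
    {c : ℝ} (hc : 0 < c) : (c • M).PosDef := by
  refine ⟨?_, fun x hx => ?_⟩
  · unfold Matrix.IsHermitian
    rw [Matrix.conjTranspose_smul, hM.1.eq]
    simp
  · exact (hM.smul hc).2 hx

private lemma hh_posSemidef_smul {m : ℕ} {M : Matrix (Fin m) (Fin m) ℝ} (hM : M.PosSemidef)
    {c : ℝ} (hc : 0 ≤ c) : (c • M).PosSemidef := by
  refine ⟨?_, fun x => ?_⟩
  · unfold Matrix.IsHermitian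
    rw [Matrix.conjTranspose_smul, hM.1.eq]
    simp
  · exact (hM.smul hc).2 x

private lemma hh_hasDerivAt_quad {m : ℕ} (A : Matrix (Fin m) (Fin m) ℝ) {u : ℝ → Fin m → ℝ}
    {u' : Fin m → ℝ} {t : ℝ} (h : HasDerivAt u u' t) :
    HasDerivAt (fun s => u s ⬝ᵥ (A *ᵥ u s))
      (u' ⬝ᵥ (A *ᵥ u t) + u t ⬝ᵥ (A *ᵥ u')) t := by
  have hc : ∀ i, HasDerivAt (fun s => u s i) (u' i) t := fun i => hasDerivAt_pi.mp h i
  have key : ∀ i ∈ Finset.univ, HasDerivAt (fun s => u s i * (A *ᵥ u s) i)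
      (u' i * (A *ᵥ u t) i + u t i * (A *ᵥ u') i) t := by
    intro i _
    have h2 : HasDerivAt (fun s => (A *ᵥ u s) i) ((A *ᵥ u') i) t := by
      simp only [Matrix.mulVec, dotProduct]
      exact HasDerivAt.fun_sum fun j _ => (hc j).const_mul (A i j)
    exact (hc i).mul h2
  have hsum := HasDerivAt.fun_sum key
  simp only [dotProduct]
  rw [Finset.sum_add_distrib] at hsum
  exact hsum

/-- For periodic SBP operators `D1`, `D2`, `D4` with a common diagonal symmetric
positive definite mass matrix `M`, the operator `L = 4I − 5 D2 + D4` is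
invertible, and the Holm-Hone semidiscretization
`∂ₜu = −L⁻¹ (D1 (u∘(L u)) + (D1 u)∘(L u))` conserves the discrete Hamiltonian
`(1/2) uᵀ·M·(4I − 5 D2 + D4)·u`. -/
theorem holm_hone_conserves_hamiltonian
    (m : ℕ) (D1 D2 D4 M A2 A4 : Matrix (Fin m) (Fin m) ℝ)
    (hM : M.PosDef) (hMdiag : M.IsDiag)
    (hD1 : M * D1 + D1ᵀ * M = 0)
    (hA2 : A2.PosSemidef)
    (hD2 : M * D2 = -A2)
    (hA4 : A4.PosSemidef)
    (hD4 : M * D4 = A4) :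
    IsUnit (4 - (5 : ℝ) • D2 + D4) ∧
      ∀ u : ℝ → Fin m → ℝ,
        (∀ t, HasDerivAt u
          (-((4 - (5 : ℝ) • D2 + D4)⁻¹ *ᵥ
            (D1 *ᵥ (u t * ((4 - (5 : ℝ) • D2 + D4) *ᵥ u t))
              + (D1 *ᵥ u t) * ((4 - (5 : ℝ) • D2 + D4) *ᵥ u t)))) t) →
        ∀ t₁ t₂ : ℝ,
          (1 / 2 : ℝ) * (u t₁ ⬝ᵥ ((M * (4 - (5 : ℝ) • D2 + D4)) *ᵥ u t₁))
            = (1 / 2 : ℝ) * (u t₂ ⬝ᵥ ((M * (4 - (5 : ℝ) • D2 + D4)) *ᵥ u t₂)) := by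
  set L : Matrix (Fin m) (Fin m) ℝ := 4 - (5:ℝ) • D2 + D4 with hLdef
  have h4 : (4 : Matrix (Fin m) (Fin m) ℝ) = (4:ℝ) • 1 := by
    rw [← Matrix.diagonal_ofNat, smul_eq_diagonal_mul]
    simp [diagonal_mul_diagonal]
  have hML : M * L = (4:ℝ) • M + (5:ℝ) • A2 + A4 := by
    rw [hLdef, mul_add, mul_sub, Matrix.mul_smul, hD2, hD4, smul_neg, sub_neg_eq_add,
      h4, Matrix.mul_smul, Matrix.mul_one]
  have hPD : (M * L).PosDef := by
    rw [hML]
    exact Matrix.PosDef.add_posSemidef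
      (Matrix.PosDef.add_posSemidef (hh_posDef_smul hM (by norm_num))
        (hh_posSemidef_smul hA2 (by norm_num))) hA4
  have hdetL : IsUnit L.det := by
    have h1 : IsUnit (M * L).det := hPD.det_pos.ne'.isUnit
    rw [Matrix.det_mul] at h1
    exact isUnit_of_mul_isUnit_right h1
  have hLunit : IsUnit L := (Matrix.isUnit_iff_isUnit_det L).mpr hdetL
  have hLinv : L * L⁻¹ = 1 := Matrix.mul_nonsing_inv L hdetL
  have hMsym : Mᵀ = M := hh_transpose_symm hM.1
  have hMLsym : (M * L)ᵀ = M * L := hh_transpose_symm hPD.1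
  refine ⟨hLunit, ?_⟩
  intro u hu t₁ t₂
  -- the key algebraic identity
  have hMD1 : M * D1 + (M * D1)ᵀ = 0 := by
    rw [Matrix.transpose_mul, hMsym]; exact hD1
  have hkey : ∀ x : Fin m → ℝ,
      x ⬝ᵥ (M *ᵥ (D1 *ᵥ (x * (L *ᵥ x)) + (D1 *ᵥ x) * (L *ᵥ x))) = 0 := by
    intro x
    set y := L *ᵥ x
    have step1 : x ⬝ᵥ (M *ᵥ (D1 *ᵥ (x * y) + (D1 *ᵥ x) * y))
        = x ⬝ᵥ ((M * D1) *ᵥ (x * y)) + (x * y) ⬝ᵥ ((M * D1) *ᵥ x) := by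
      rw [Matrix.mulVec_add, dotProduct_add, Matrix.mulVec_mulVec,
        hh_diag_mulVec_mul hMdiag, hh_dot_mul_right, Matrix.mulVec_mulVec]
    rw [step1, hh_dot_trans (M * D1) (x * y) x, dotProduct_comm,
      ← add_dotProduct, ← Matrix.add_mulVec, hMD1, Matrix.zero_mulVec,
      zero_dotProduct]
  have hderiv : ∀ t, HasDerivAt (fun s => (1/2:ℝ) * (u s ⬝ᵥ ((M * L) *ᵥ u s))) 0 t := by
    intro t
    set x := u t with hx
    set w := D1 *ᵥ (x * (L *ᵥ x)) + (D1 *ᵥ x) * (L *ᵥ x) with hw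
    set u' : Fin m → ℝ := -(L⁻¹ *ᵥ w) with hu'
    have hq := (hh_hasDerivAt_quad (M * L) (hu t)).const_mul (1/2:ℝ)
    have hMLu' : (M * L) *ᵥ u' = -(M *ᵥ w) := by
      rw [hu', Matrix.mulVec_neg, Matrix.mulVec_mulVec, Matrix.mul_assoc,
        hLinv, Matrix.mul_one]
    have hzero : u' ⬝ᵥ ((M * L) *ᵥ x) + x ⬝ᵥ ((M * L) *ᵥ u') = 0 := by
      rw [hh_dot_trans (M * L) u' x, hMLsym, dotProduct_comm, hMLu',
        dotProduct_neg, hkey x]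
      simp
    rw [hzero, mul_zero] at hq
    exact hq
  have hdiff : Differentiable ℝ (fun s => (1/2:ℝ) * (u s ⬝ᵥ ((M * L) *ᵥ u s))) :=
    fun t => (hderiv t).differentiableAt
  have hd0 : ∀ t, deriv (fun s => (1/2:ℝ) * (u s ⬝ᵥ ((M * L) *ᵥ u s))) t = 0 :=
    fun t => (hderiv t).deriv
  exact is_const_of_deriv_eq_zero hdiff hd0 t₁ t₂
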